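/- Let d, g : ℂ → ℂ be functions and let 𝓕ₙ be the associated generalized Fibonacci polynomials of Fibonacci type over ℂ. Let n ≥ 2 and let r, s ∈ ℂ with s ≠ 0, s² = g(r) (in particular g(r) ≠ 0). If d(r)/s = 2i·cos(jπ/n) for some integer j with 1 ≤ j ≤ n − 1, then r is a root of 𝓕ₙ, i.e. 𝓕ₙ(r) = 0. -/
import Mathlib


/-- Generalized Fibonacci polynomials of Fibonacci type over `ℂ`:
`𝓕₀ = 0`, `𝓕₁ = 1`, `𝓕ₙ = d·𝓕ₙ₋₁ + g·𝓕ₙ₋₂`. -/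
noncomputable def GFPFC (d g : ℂ → ℂ) : ℕ → ℂ → ℂ
  | 0 => fun _ => 0
  | 1 => fun _ => 1
  | n + 2 => fun x => d x * GFPFC d g (n + 1) x + g x * GFPFC d g n x

private lemma gfpfc_key (d g : ℂ → ℂ) (r s θ : ℂ)
    (hd : d r = 2 * Complex.I * Complex.cos θ * s) (hg : g r = s ^ 2) :
    ∀ k : ℕ, GFPFC d g k r * s * Complex.I * Complex.sin θ
      = s ^ k * Complex.I ^ k * Complex.sin (k * θ) := by
  intro k
  induction k using Nat.twoStepInduction with
  | zero => simp [GFPFC]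
  | one => simp [GFPFC]
  | more k ih1 ih2 =>
    have e1 : Complex.sin ((k + 2 : ℕ) * θ) = Complex.sin ((k+1) * θ + θ) := by
      push_cast; ring_nf
    have e2 : Complex.sin ((k : ℕ) * θ) = Complex.sin ((k+1) * θ - θ) := by
      push_cast; ring_nf
    have hsin : Complex.sin ((k + 2 : ℕ) * θ)
        = 2 * Complex.cos θ * Complex.sin ((k+1) * θ) - Complex.sin ((k : ℕ) * θ) := by
      rw [e1, e2, Complex.sin_add, Complex.sin_sub]; ring
    have hI : (Complex.I : ℂ) ^ (k + 2) = - Complex.I ^ k := by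
      rw [pow_add, Complex.I_sq]; ring
    have : GFPFC d g (k + 2) r * s * Complex.I * Complex.sin θ
        = d r * (GFPFC d g (k+1) r * s * Complex.I * Complex.sin θ)
          + g r * (GFPFC d g k r * s * Complex.I * Complex.sin θ) := by
      show (d r * GFPFC d g (k+1) r + g r * GFPFC d g k r) * s * Complex.I * Complex.sin θ = _
      ring
    rw [this, ih2, ih1, hd, hg, hsin, hI]
    push_cast
    have : Complex.I ^ (k + 1) = Complex.I ^ k * Complex.I := pow_succ _ _
    rw [this]
    ring_nf
    rw [Complex.I_sq]
    ring

theorem gfpfc_roots (d g : ℂ → ℂ) (n : ℕ) (hn : 2 ≤ n)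
    (r s : ℂ) (hs : s ≠ 0) (hsg : s ^ 2 = g r)
    (hroot : ∃ j : ℕ, 1 ≤ j ∧ j ≤ n - 1 ∧
      d r / s = 2 * Complex.I * Complex.cos ((j : ℂ) * (Real.pi : ℂ) / (n : ℂ))) :
    GFPFC d g n r = 0 := by
  obtain ⟨j, hj1, hj2, hdr⟩ := hroot
  set θ : ℂ := (j : ℂ) * (Real.pi : ℂ) / (n : ℂ) with hθ
  have hd : d r = 2 * Complex.I * Complex.cos θ * s := by
    field_simp at hdr; linear_combination hdr
  have hn0 : (n : ℂ) ≠ 0 := by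
    have : n ≠ 0 := by omega
    exact_mod_cast this
  have key := gfpfc_key d g r s θ hd hsg.symm n
  have hnθ : (n : ℂ) * θ = (j : ℂ) * (Real.pi : ℂ) := by
    rw [hθ]; field_simp
  have hsin_n : Complex.sin ((n : ℂ) * θ) = 0 := by
    rw [hnθ]
    have : ((j : ℂ) * (Real.pi : ℂ)) = ((j * Real.pi : ℝ) : ℂ) := by push_cast; ring
    rw [this, ← Complex.ofReal_sin, Real.sin_nat_mul_pi]
    simp
  have hθreal : θ = ((j * Real.pi / n : ℝ) : ℂ) := by push_cast [hθ]; ring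
  have hjn : j < n := by omega
  have hsinθ : Complex.sin θ ≠ 0 := by
    rw [hθreal, ← Complex.ofReal_sin]
    simp only [ne_eq, Complex.ofReal_eq_zero]
    have hnpos : (0:ℝ) < n := by positivity
    apply ne_of_gt
    apply Real.sin_pos_of_pos_of_lt_pi
    · positivity
    · rw [div_lt_iff₀ hnpos]
      have : (j : ℝ) < n := by exact_mod_cast hjn
      nlinarith [Real.pi_pos]
  rw [hsin_n, mul_zero] at key
  have := mul_eq_zero.mp key
  rcases this with h | h
  · rcases mul_eq_zero.mp h with h' | h'
    · rcases mul_eq_zero.mp h' with h'' | h''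
      · exact h''
      · exact absurd h'' hs
    · exact absurd h' Complex.I_ne_zero
  · exact absurd h hsinθ
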